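/- In SU(2), let U_θ = diag(e^{iθ}, e^{-iθ}) and U_φ = diag(e^{iφ}, e^{-iφ}), and let ξ ∈ su(2) lie in the real span of j = [[0,1],[-1,0]] and k = [[0,i],[i,0]] with norm ‖ξ‖ (where (j,k) is orthonormal). Then Tr(U_θ e^ξ U_φ e^{-ξ} U_{-θ-φ}) = 2 - 4 sin²(φ) ‖ξ‖² + O(‖ξ‖³) as ξ → 0. -/

import Mathlib

open Matrix

/-- The diagonal matrix `U_θ = diag(e^{iθ}, e^{-iθ})`. -/
noncomputable def Udiag (θ : ℝ) : Matrix (Fin 2) (Fin 2) ℂ :=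
  !![Complex.exp (θ * Complex.I), 0; 0, Complex.exp (-θ * Complex.I)]

/-- `j = [[0,1],[-1,0]]`. -/
def jMat : Matrix (Fin 2) (Fin 2) ℂ := !![0, 1; -1, 0]

/-- `k = [[0,i],[i,0]]`. -/
def kMat : Matrix (Fin 2) (Fin 2) ℂ := !![0, Complex.I; Complex.I, 0]

/-- Matrix exponential `e^A = ∑ A^m / m!`. -/
noncomputable def matExp (A : Matrix (Fin 2) (Fin 2) ℂ) : Matrix (Fin 2) (Fin 2) ℂ :=
  ∑' m : ℕ, ((m.factorial : ℂ))⁻¹ • A ^ m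

/-- `ξ = a·j + b·k` as an explicit anti-diagonal matrix. -/
lemma xi_eq (a b : ℝ) : (a : ℂ) • jMat + (b : ℂ) • kMat
    = !![0, (a:ℂ) + b*Complex.I; -(a:ℂ) + b*Complex.I, 0] := by
  ext i j
  fin_cases i <;> fin_cases j <;> simp [jMat, kMat] <;> ring

/-- The square of an anti-diagonal `2×2` matrix is scalar. -/
lemma M_sq (z w : ℂ) :
    !![0, z; w, 0] * !![0, z; w, 0] = (z*w) • (1 : Matrix (Fin 2) (Fin 2) ℂ) := by
  ext i j
  fin_cases i <;> fin_cases j <;>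
    simp [Matrix.mul_apply, Fin.sum_univ_two, Matrix.one_apply] <;> ring

/-- The coefficient `sin ρ / ρ`, defined by its power series. -/
noncomputable def gAux (ρ : ℝ) : ℝ := ∑' n : ℕ, (-1)^n * ρ^(2*n) / (2*n+1).factorial

lemma gAux_summable (ρ : ℝ) : Summable fun n : ℕ => (-1:ℝ)^n * ρ^(2*n) / (2*n+1).factorial := by
  apply Summable.of_norm_bounded (Real.summable_pow_div_factorial (ρ^2))
  intro n
  have h1 : ((n.factorial : ℝ)) ≤ ((2*n+1).factorial : ℝ) := by
    exact_mod_cast Nat.factorial_le (by omega)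
  have h2 : (0:ℝ) < n.factorial := by positivity
  have h3 : (0:ℝ) < ((2*n+1).factorial : ℝ) := by positivity
  have heq : ‖(-1:ℝ)^n * ρ^(2*n) / (2*n+1).factorial‖ = (ρ^2)^n / (2*n+1).factorial := by
    rw [pow_mul, norm_div, norm_mul, norm_pow, norm_pow, norm_neg, norm_one, one_pow,
      one_mul, Real.norm_eq_abs, abs_of_nonneg (sq_nonneg ρ), Real.norm_natCast]
  rw [heq]
  exact div_le_div_of_nonneg_left (by positivity) h2 h1

lemma gAux_hasSum (ρ : ℝ) :
    HasSum (fun n : ℕ => (-1:ℝ)^n * ρ^(2*n) / (2*n+1).factorial) (gAux ρ) :=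
  (gAux_summable ρ).hasSum

lemma gAux_mul (ρ : ℝ) : gAux ρ * ρ = Real.sin ρ := by
  have h := (gAux_hasSum ρ).mul_right ρ
  have h2 : (fun n : ℕ => (-1:ℝ)^n * ρ^(2*n) / (2*n+1).factorial * ρ)
      = fun n : ℕ => (-1:ℝ)^n * ρ^(2*n+1) / (2*n+1).factorial := by
    funext n; rw [pow_succ]; ring
  rw [h2] at h
  exact (h.unique (Real.hasSum_sin ρ))

/-- Closed form for the matrix exponential of a matrix with `ξ² = -ρ²·1`. -/
lemma matExp_of_sq (ξ : Matrix (Fin 2) (Fin 2) ℂ) (ρ : ℝ)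
    (h : ξ * ξ = (-(ρ^2 : ℝ) : ℂ) • 1) :
    matExp ξ = ((Real.cos ρ : ℝ) : ℂ) • 1 + ((gAux ρ : ℝ) : ℂ) • ξ := by
  have hpow_even : ∀ k : ℕ, ξ ^ (2*k) = ((-(ρ^2:ℝ) : ℂ))^k • 1 := by
    intro k
    rw [pow_mul, pow_two, h, smul_pow, one_pow]
  have hpow_odd : ∀ k : ℕ, ξ ^ (2*k+1) = ((-(ρ^2:ℝ) : ℂ))^k • ξ := by
    intro k
    rw [pow_succ, hpow_even, smul_mul_assoc, one_mul]
  rw [matExp]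
  refine HasSum.tsum_eq ?_
  refine HasSum.even_add_odd ?_ ?_
  · have hc : HasSum (fun n : ℕ => ((-1:ℂ))^n * (ρ:ℂ)^(2*n) / (2*n).factorial)
        (Complex.cos ρ) := Complex.hasSum_cos ρ
    have := hc.smul_const (1 : Matrix (Fin 2) (Fin 2) ℂ)
    rw [← Complex.ofReal_cos] at this
    convert this using 2 with k
    rw [hpow_even, smul_smul]
    congr 1
    have : ((-(ρ^2:ℝ)) : ℂ)^k = (-1:ℂ)^k * (ρ:ℂ)^(2*k) := by
      push_cast
      rw [neg_pow, pow_mul]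
    rw [this]
    field_simp
  · have hs : HasSum (fun n : ℕ => ((-1:ℝ))^n * ρ^(2*n) / (2*n+1).factorial) (gAux ρ) :=
      gAux_hasSum ρ
    have hsc : HasSum (fun n : ℕ => (((-1:ℝ))^n * ρ^(2*n) / (2*n+1).factorial : ℂ))
        ((gAux ρ : ℝ) : ℂ) := by
      exact_mod_cast Complex.hasSum_ofReal.mpr hs
    have := hsc.smul_const ξ
    convert this using 2 with k
    rw [hpow_odd, smul_smul]
    congr 1
    have : ((-(ρ^2:ℝ)) : ℂ)^k = (-1:ℂ)^k * (ρ:ℂ)^(2*k) := by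
      push_cast
      rw [neg_pow, pow_mul]
    rw [this]
    push_cast
    field_simp

/-- The exact value of the trace. -/
lemma trace_formula (θ φ ρ : ℝ) (c g : ℝ) (z w : ℂ)
    (hzw : z * w = (-(ρ^2 : ℝ) : ℂ))
    (hg : g * ρ = Real.sin ρ) (hc : c = Real.cos ρ) :
    Matrix.trace (Udiag θ * ((c:ℂ) • 1 + (g:ℂ) • !![0, z; w, 0]) * Udiag φ *
        ((c:ℂ) • 1 + (g:ℂ) • (-!![0, z; w, 0])) * Udiag (-θ - φ))
      = ((2 - 4 * Real.sin φ ^ 2 * Real.sin ρ ^ 2 : ℝ) : ℂ) := by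
  simp only [Udiag, Matrix.trace_fin_two, Matrix.mul_apply, Fin.sum_univ_two,
    Matrix.add_apply, Matrix.smul_apply, Matrix.one_apply, Matrix.neg_apply,
    Matrix.cons_val', Matrix.cons_val_zero, Matrix.cons_val_one, Matrix.head_cons,
    Matrix.head_fin_const, Matrix.empty_val', Matrix.cons_val_fin_one]
  norm_num
  set x := Complex.exp ((θ:ℂ) * Complex.I) with hxdef
  set y := Complex.exp ((φ:ℂ) * Complex.I) with hydef
  have hx0 : x ≠ 0 := Complex.exp_ne_zero _
  have hy0 : y ≠ 0 := Complex.exp_ne_zero _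
  have hx' : Complex.exp (-((θ:ℂ) * Complex.I)) = x⁻¹ := by rw [Complex.exp_neg]
  have hy' : Complex.exp (-((φ:ℂ) * Complex.I)) = y⁻¹ := by rw [Complex.exp_neg]
  have hxy1 : Complex.exp ((-(θ:ℂ) - (φ:ℂ)) * Complex.I) = x⁻¹ * y⁻¹ := by
    rw [← Complex.exp_neg, ← Complex.exp_neg, ← Complex.exp_add]
    congr 1
    ring
  have hxy2 : Complex.exp (((φ:ℂ) + (θ:ℂ)) * Complex.I) = y * x := by
    rw [← Complex.exp_add]
    congr 1
    ring
  have hsinφ : Complex.sin (φ:ℂ) = (y⁻¹ - y) * Complex.I / 2 := by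
    rw [Complex.sin, neg_mul, hy']
  have hg' : (g:ℂ) * (ρ:ℂ) = Complex.sin (ρ:ℂ) := by
    rw [← Complex.ofReal_sin, ← hg]
    push_cast
    ring
  have hc' : (c:ℂ)^2 = 1 - Complex.sin (ρ:ℂ)^2 := by
    rw [hc, Complex.ofReal_cos, ← Complex.cos_sq']
  have hgg : (g:ℂ)^2 * (z*w) = -(Complex.sin (ρ:ℂ))^2 := by
    rw [hzw]
    push_cast
    rw [← hg']
    ring
  rw [hxy1, hxy2, hx', hy', hsinφ]
  field_simp
  linear_combination (4*Complex.sin (ρ:ℂ)^2*x^3*y^3 - 8*Complex.sin (ρ:ℂ)^2*x^3*y^5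
      + 4*Complex.sin (ρ:ℂ)^2*x^3*y^7) * Complex.I_sq
    + (8*x^3*y^5) * hc' + (-4*x^3*y^3 - 4*x^3*y^7) * hgg
    + (8*y^2 - 8*y^5*x^3) * hc' + (4*y^3*x^3 - 4*y^4 + 4*y^7*x^3 - 4) * hgg
    + (Complex.sin (ρ:ℂ)^2*(-8*y^2 - 4*y^3*x^3 + 4*y^4 + 8*y^5*x^3 - 4*y^7*x^3 + 4)) * Complex.I_sq

/-- For `ξ = a·j + b·k` with `‖ξ‖² = a² + b²`,
`Tr(U_θ e^ξ U_φ e^{-ξ} U_{-θ-φ}) = 2 - 4 sin²(φ)(a²+b²) + O((a²+b²)^{3/2})` as `ξ → 0`. -/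
theorem stmt_8 (θ φ : ℝ) :
    ∃ C > 0, ∃ δ > 0, ∀ a b : ℝ, Real.sqrt (a ^ 2 + b ^ 2) ≤ δ →
      ‖Matrix.trace
          (Udiag θ * matExp ((a : ℂ) • jMat + (b : ℂ) • kMat) * Udiag φ *
            matExp (-((a : ℂ) • jMat + (b : ℂ) • kMat)) * Udiag (-θ - φ))
        - ((2 - 4 * Real.sin φ ^ 2 * (a ^ 2 + b ^ 2) : ℝ) : ℂ)‖
        ≤ C * Real.sqrt (a ^ 2 + b ^ 2) ^ 3 := by
  refine ⟨2, by norm_num, 1, by norm_num, fun a b hδ => ?_⟩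
  set r := Real.sqrt (a^2+b^2) with hrdef
  have hr0 : 0 ≤ r := Real.sqrt_nonneg _
  have hr2 : r^2 = a^2+b^2 := Real.sq_sqrt (by positivity)
  set z : ℂ := (a:ℂ) + b*Complex.I with hz
  set w : ℂ := -(a:ℂ) + b*Complex.I with hw
  have hzw : z * w = (-(r^2:ℝ) : ℂ) := by
    rw [hz, hw, hr2]
    push_cast
    linear_combination ((b:ℂ)^2) * Complex.I_sq
  have hM : (a:ℂ) • jMat + (b:ℂ) • kMat = !![0, z; w, 0] := xi_eq a b
  have hsq : !![0,z;w,0] * !![0,z;w,0] = (-(r^2:ℝ):ℂ) • 1 := by rw [M_sq, hzw]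
  have hsqneg : (-(!![0,z;w,0] : Matrix (Fin 2) (Fin 2) ℂ)) * (-!![0,z;w,0])
      = (-(r^2:ℝ):ℂ) • 1 := by rw [neg_mul_neg, hsq]
  have he1 := matExp_of_sq _ r hsq
  have he2 := matExp_of_sq _ r hsqneg
  rw [hM, he1, he2, trace_formula θ φ r (Real.cos r) (gAux r) z w hzw (gAux_mul r) rfl]
  -- the remainder estimate
  rw [← Complex.ofReal_sub, Complex.norm_real]
  have hsle : Real.sin r ≤ r := Real.sin_le hr0
  have hs0 : 0 ≤ Real.sin r :=
    Real.sin_nonneg_of_nonneg_of_le_pi hr0 (le_trans hδ (by linarith [Real.pi_gt_three]))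
  have hcube : r - r^3/4 ≤ Real.sin r := by
    rcases eq_or_lt_of_le hr0 with h | h
    · simp [← h]
    · nlinarith [Real.sin_gt_sub_cube h, pow_nonneg hr0 3]
  have hφ : Real.sin φ ^ 2 ≤ 1 := Real.sin_sq_le_one φ
  have hφ0 : 0 ≤ Real.sin φ ^ 2 := sq_nonneg _
  have hkey : (2 - 4*Real.sin φ^2 * Real.sin r^2) - (2 - 4*Real.sin φ^2*(a^2+b^2))
      = 4 * Real.sin φ^2 * (r^2 - Real.sin r^2) := by rw [← hr2]; ring
  have hsq2 : Real.sin r ^ 2 ≤ r ^ 2 := by nlinarith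
  rw [hkey, Real.norm_eq_abs, abs_of_nonneg (by nlinarith)]
  have h1 : r ^ 2 - Real.sin r ^ 2 ≤ r^3/2 := by nlinarith [pow_le_pow_left₀ hr0 hδ 4]
  nlinarith [pow_nonneg hr0 3]
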